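/- The cycle graph C_8 on 8 vertices satisfies rvcl(C_8) = 4. -/

import Mathlib

namespace LocatingRainbow

open SimpleGraph

variable {V : Type*}

/-- The internal vertices of a walk: its support without the endpoints. -/
def internalVertices {G : SimpleGraph V} {u v : V} (p : G.Walk u v) : List V :=
  p.support.tail.dropLast

/-- `c` is a rainbow vertex coloring of `G` (with colors in `Fin k`) if any two distinct
vertices are joined by a path whose internal vertices have pairwise distinct colors. -/
def IsRainbowVertexColoring (G : SimpleGraph V) {k : ℕ} (c : V → Fin k) : Prop :=
  ∀ u v : V, u ≠ v → ∃ p : G.Walk u v, p.IsPath ∧ ((internalVertices p).map c).Nodup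

/-- The distance from a vertex `v` to the color class of the color `i`. -/
noncomputable def distToColor (G : SimpleGraph V) {k : ℕ} (c : V → Fin k) (v : V) (i : Fin k) :
    ℕ :=
  sInf {m | ∃ y, c y = i ∧ G.dist v y = m}

/-- The rainbow code of a vertex `v`: the vector of distances to all color classes. -/
noncomputable def rainbowCode (G : SimpleGraph V) {k : ℕ} (c : V → Fin k) (v : V) :
    Fin k → ℕ :=
  fun i => distToColor G c v i

/-- `c` is a locating rainbow coloring if it is a rainbow vertex coloring and distinct
vertices have distinct rainbow codes. -/
def IsLocatingRainbowColoring (G : SimpleGraph V) {k : ℕ} (c : V → Fin k) : Prop :=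
  IsRainbowVertexColoring G c ∧ Function.Injective (rainbowCode G c)

/-- The rainbow vertex connection number of `G`. -/
noncomputable def rvc (G : SimpleGraph V) : ℕ :=
  sInf {k | ∃ c : V → Fin k, IsRainbowVertexColoring G c}

/-- The locating rainbow connection number of `G`. -/
noncomputable def rvcl (G : SimpleGraph V) : ℕ :=
  sInf {k | ∃ c : V → Fin k, IsLocatingRainbowColoring G c}

end LocatingRainbow

section AuxLR
open LocatingRainbow SimpleGraph
open Fin.NatCast

/-! ### Auxiliary machinery -/

def mk8 {α : Type*} (a b c d e f g h : α) : Fin 8 → α := fun v =>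
  match v with
  | ⟨0,_⟩ => a | ⟨1,_⟩ => b | ⟨2,_⟩ => c | ⟨3,_⟩ => d
  | ⟨4,_⟩ => e | ⟨5,_⟩ => f | ⟨6,_⟩ => g | ⟨7,_⟩ => h

lemma mk8_eta {α : Type*} (c : Fin 8 → α) : mk8 (c 0) (c 1) (c 2) (c 3) (c 4) (c 5) (c 6) (c 7) = c := by
  funext v
  match v with
  | ⟨0,_⟩ => rfl | ⟨1,_⟩ => rfl | ⟨2,_⟩ => rfl | ⟨3,_⟩ => rfl
  | ⟨4,_⟩ => rfl | ⟨5,_⟩ => rfl | ⟨6,_⟩ => rfl | ⟨7,_⟩ => rfl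

def D8 (u v : Fin 8) : ℕ := min (v-u).val (u-v).val

def Dtab : Fin 8 → Fin 8 → ℕ :=
  mk8 (mk8 0 1 2 3 4 3 2 1) (mk8 1 0 1 2 3 4 3 2) (mk8 2 1 0 1 2 3 4 3)
      (mk8 3 2 1 0 1 2 3 4) (mk8 4 3 2 1 0 1 2 3) (mk8 3 4 3 2 1 0 1 2)
      (mk8 2 3 4 3 2 1 0 1) (mk8 1 2 3 4 3 2 1 0)

lemma Dtab_eq : ∀ u v : Fin 8, Dtab u v = D8 u v := by decide

lemma D8_le_four : ∀ u v : Fin 8, D8 u v ≤ 4 := by decide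

/-! ### Walks along the cycle -/

def walkTo (u : Fin 8) : (d : ℕ) → (cycleGraph 8).Walk u (u + (d : Fin 8))
  | 0 => Walk.nil.copy rfl (by simp)
  | d+1 => (Walk.cons (by rw [cycleGraph_adj]; right; exact add_sub_cancel_left u 1)
      (walkTo (u+1) d)).copy rfl (by push_cast; abel)

lemma length_walkTo (u : Fin 8) (d : ℕ) : (walkTo u d).length = d := by
  induction d generalizing u with
  | zero => simp [walkTo]
  | succ d ih => simp [walkTo, ih]

def cwS (u : Fin 8) (d : ℕ) : List (Fin 8) :=
  (List.range (d+1)).map (fun (j : ℕ) => u + (j : Fin 8))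

lemma cwS_succ (u : Fin 8) (d : ℕ) : cwS u (d+1) = u :: cwS (u+1) d := by
  unfold cwS
  rw [List.range_succ_eq_map, List.map_cons, List.map_map]
  congr 1
  · simp
  · refine List.map_congr_left fun j _ => ?_
    show u + ((j+1 : ℕ) : Fin 8) = (u + 1) + (j : Fin 8)
    push_cast; abel

lemma support_walkTo (u : Fin 8) (d : ℕ) : (walkTo u d).support = cwS u d := by
  induction d generalizing u with
  | zero => simp [walkTo, cwS, List.range_succ]
  | succ d ih =>
    rw [cwS_succ]
    simp [walkTo, Walk.support_copy, Walk.support_cons, ih]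

/-! ### Distance in the cycle -/

lemma D8_le_length {u v : Fin 8} (p : (cycleGraph 8).Walk u v) : D8 u v ≤ p.length := by
  induction p with
  | nil => simpa using (by decide : ∀ w : Fin 8, D8 w w ≤ 0) _
  | @cons u b v h q ih =>
    have step : ∀ u b w : Fin 8, (cycleGraph 8).Adj u b → D8 u w ≤ D8 b w + 1 := by decide
    simpa [Walk.length_cons] using le_trans (step u b v h) (by omega)

lemma dist_eq (u v : Fin 8) : (cycleGraph 8).dist u v = D8 u v := by
  refine le_antisymm ?_ ?_
  · have key : ∀ a b : Fin 8, (cycleGraph 8).dist a b ≤ (b - a).val := by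
      intro a b
      have hd : a + (((b - a).val : ℕ) : Fin 8) = b := by
        rw [Fin.cast_val_eq_self]; exact add_sub_cancel a b
      calc (cycleGraph 8).dist a b ≤ ((walkTo a (b-a).val).copy rfl hd).length :=
            SimpleGraph.dist_le _
        _ = (b - a).val := by rw [Walk.length_copy, length_walkTo]
    have h2 := key v u
    rw [SimpleGraph.dist_comm] at h2
    exact le_min (key u v) h2
  · obtain ⟨p, hp⟩ := (cycleGraph_connected (n := 7) u v).exists_walk_length_eq_dist
    rw [← hp]; exact D8_le_length p

/-! ### Codes -/

namespace LRaux

def f8 {k : ℕ} (c : Fin 8 → Fin k) (v : Fin 8) (i : Fin k) (y : Fin 8) : ℕ :=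
  if c y = i then Dtab v y else 9

def m8 {k : ℕ} (c : Fin 8 → Fin k) (v : Fin 8) (i : Fin k) : ℕ :=
  (Finset.univ : Finset (Fin 8)).inf' ⟨0, Finset.mem_univ 0⟩ (f8 c v i)

def codeN {k : ℕ} (c : Fin 8 → Fin k) (v : Fin 8) (i : Fin k) : ℕ :=
  if m8 c v i = 9 then 0 else m8 c v i

end LRaux

open LRaux

lemma f8_cases {k : ℕ} (c : Fin 8 → Fin k) (v : Fin 8) (i : Fin k) (y : Fin 8) :
    (c y = i ∧ f8 c v i y = D8 v y) ∨ (c y ≠ i ∧ f8 c v i y = 9) := by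
  unfold f8
  by_cases h : c y = i
  · exact Or.inl ⟨h, by rw [if_pos h, Dtab_eq]⟩
  · exact Or.inr ⟨h, by rw [if_neg h]⟩

lemma distToColor_eq {k : ℕ} (c : Fin 8 → Fin k) (v : Fin 8) (i : Fin k) :
    distToColor (cycleGraph 8) c v i = codeN c v i := by
  unfold distToColor codeN
  by_cases hm : m8 c v i = 9
  · rw [if_pos hm]
    have hempty : ∀ y, c y ≠ i := by
      intro y hcy
      have h1 : m8 c v i ≤ f8 c v i y := Finset.inf'_le _ (Finset.mem_univ y)
      rcases f8_cases c v i y with ⟨-, he⟩ | ⟨hne, -⟩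
      · have := D8_le_four v y; omega
      · exact hne hcy
    have hK : {m | ∃ y, c y = i ∧ (cycleGraph 8).dist v y = m} = ∅ := by
      ext m
      simp only [Set.mem_setOf_eq, Set.mem_empty_iff_false, iff_false, not_exists]
      intro y h
      exact hempty y h.1
    rw [hK, Nat.sInf_empty]
  · rw [if_neg hm]
    obtain ⟨y₀, -, hy₀⟩ :=
      Finset.exists_mem_eq_inf' (⟨0, Finset.mem_univ 0⟩ : (Finset.univ : Finset (Fin 8)).Nonempty)
        (f8 c v i)
    have hy₀' : m8 c v i = f8 c v i y₀ := hy₀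
    rcases f8_cases c v i y₀ with ⟨hcy₀, he⟩ | ⟨-, he⟩
    swap
    · exact absurd (hy₀'.trans he) hm
    have hmem : m8 c v i ∈ {m | ∃ y, c y = i ∧ (cycleGraph 8).dist v y = m} :=
      ⟨y₀, hcy₀, by rw [dist_eq]; omega⟩
    refine le_antisymm (Nat.sInf_le hmem) ?_
    obtain ⟨y, hcy, hdy⟩ := Nat.sInf_mem (⟨_, hmem⟩ : Set.Nonempty _)
    have h1 : m8 c v i ≤ f8 c v i y := Finset.inf'_le _ (Finset.mem_univ y)
    rcases f8_cases c v i y with ⟨-, he'⟩ | ⟨hne, -⟩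
    · rw [← hdy, dist_eq]; omega
    · exact absurd hcy hne

lemma rainbowCode_eq {k : ℕ} (c : Fin 8 → Fin k) (v : Fin 8) (i : Fin k) :
    rainbowCode (cycleGraph 8) c v i = codeN c v i := distToColor_eq c v i

lemma dropLast_reverse' {α : Type*} (l : List α) : l.reverse.dropLast = l.tail.reverse := by
  have h := List.tail_reverse (l := l.reverse)
  rw [List.reverse_reverse] at h
  rw [h, List.reverse_reverse]

lemma length_bound {k : ℕ} (c : Fin 8 → Fin k) {u v : Fin 8} (p : (cycleGraph 8).Walk u v)
    (h : ((internalVertices p).map c).Nodup) : p.length - 1 ≤ k := by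
  have h1 : ((internalVertices p).map c).length ≤ Fintype.card (Fin k) := h.length_le_card
  simp only [List.length_map, internalVertices, List.length_dropLast, List.length_tail,
    Walk.length_support, Fintype.card_fin] at h1
  omega

lemma antipodal_support {u v : Fin 8} (p : (cycleGraph 8).Walk u v) (hv : v = u + 4)
    (hl : p.length = 4) :
    p.support = [u, u+1, u+2, u+3, v] ∨ p.support = [u, u-1, u-2, u-3, v] := by
  have key : ∀ (w x1 x2 x3 : Fin 8), (cycleGraph 8).Adj w x1 → (cycleGraph 8).Adj x1 x2 →
      (cycleGraph 8).Adj x2 x3 → (cycleGraph 8).Adj x3 (w+4) →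
      (x1 = w+1 ∧ x2 = w+2 ∧ x3 = w+3) ∨ (x1 = w-1 ∧ x2 = w-2 ∧ x3 = w-3) := by decide
  cases p with
  | nil => simp at hl
  | cons h1 q =>
  cases q with
  | nil => simp at hl
  | cons h2 r =>
  cases r with
  | nil => simp at hl
  | cons h3 s =>
  cases s with
  | nil => simp at hl
  | cons h4 t =>
  cases t with
  | nil =>
    rcases key _ _ _ _ h1 h2 h3 (hv ▸ h4) with ⟨e1, e2, e3⟩ | ⟨e1, e2, e3⟩
    · left; simp [Walk.support_cons, e1, e2, e3]
    · right; simp [Walk.support_cons, e1, e2, e3]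
  | cons h5 w => simp [Walk.length_cons] at hl

lemma ant_prop {k : ℕ} (c : Fin 8 → Fin k) (h : IsRainbowVertexColoring (cycleGraph 8) c)
    (hk : k ≤ 3) (u : Fin 8) :
    (c (u+1) ≠ c (u+2) ∧ c (u+1) ≠ c (u+3) ∧ c (u+2) ≠ c (u+3)) ∨
    (c (u+5) ≠ c (u+6) ∧ c (u+5) ≠ c (u+7) ∧ c (u+6) ≠ c (u+7)) := by
  have hne : ∀ w : Fin 8, w ≠ w + 4 := by decide
  obtain ⟨p, hp, hnd⟩ := h u (u+4) (hne u)
  have hge : 4 ≤ p.length := by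
    have h1 := SimpleGraph.dist_le p
    rw [dist_eq] at h1
    have h2 : ∀ w : Fin 8, D8 w (w+4) = 4 := by decide
    rw [h2] at h1
    exact h1
  have hle := length_bound c p hnd
  have hl4 : p.length = 4 := by omega
  rcases antipodal_support p rfl hl4 with hs | hs
  · left
    have hi : internalVertices p = [u+1, u+2, u+3] := by
      simp [internalVertices, hs]
    rw [hi] at hnd
    simp only [List.map_cons, List.map_nil, List.nodup_cons, List.mem_cons,
      List.mem_singleton, List.not_mem_nil, not_or, List.nodup_nil] at hnd
    exact ⟨hnd.1.1, hnd.1.2.1, hnd.2.1.1⟩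
  · right
    have hi : internalVertices p = [u-1, u-2, u-3] := by
      simp [internalVertices, hs]
    rw [hi] at hnd
    simp only [List.map_cons, List.map_nil, List.nodup_cons, List.mem_cons,
      List.mem_singleton, List.not_mem_nil, not_or, List.nodup_nil] at hnd
    have e5 : u + 5 = u - 3 := (by decide : ∀ w : Fin 8, w + 5 = w - 3) u
    have e6 : u + 6 = u - 2 := (by decide : ∀ w : Fin 8, w + 6 = w - 2) u
    have e7 : u + 7 = u - 1 := (by decide : ∀ w : Fin 8, w + 7 = w - 1) u
    rw [e5, e6, e7]
    exact ⟨fun hq => hnd.2.1.1 hq.symm, fun hq => hnd.1.2.1 hq.symm, fun hq => hnd.1.1 hq.symm⟩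

lemma k_ge_3 {k : ℕ} (c : Fin 8 → Fin k) (h : IsRainbowVertexColoring (cycleGraph 8) c) :
    3 ≤ k := by
  have hne : (0 : Fin 8) ≠ 0 + 4 := by decide
  obtain ⟨p, hp, hnd⟩ := h 0 (0+4) hne
  have hge : 4 ≤ p.length := by
    have h1 := SimpleGraph.dist_le p
    rw [dist_eq] at h1
    have h2 : D8 0 (0+4) = 4 := by decide
    rw [h2] at h1
    exact h1
  have hle := length_bound c p hnd
  omega

def triP {k : ℕ} (c : Fin 8 → Fin k) : Prop :=
  ∀ u : Fin 8, (c (u+1) ≠ c (u+2) ∧ c (u+1) ≠ c (u+3) ∧ c (u+2) ≠ c (u+3)) ∨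
    (c (u+5) ≠ c (u+6) ∧ c (u+5) ≠ c (u+7) ∧ c (u+6) ≠ c (u+7))

instance {k : ℕ} (c : Fin 8 → Fin k) : Decidable (triP c) := by unfold triP; infer_instance

def antB {k : ℕ} (c : Fin 8 → Fin k) : Bool := decide (triP c)

def codeT (c : Fin 8 → Fin 3) (v : Fin 8) : ℕ × ℕ × ℕ :=
  (codeN c v 0, codeN c v 1, codeN c v 2)

def injB (c : Fin 8 → Fin 3) : Bool :=
  decide (((List.finRange 8).map (codeT c)).Nodup)

set_option maxHeartbeats 4000000 in
set_option maxRecDepth 10000 in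
lemma bigDecide : ∀ a b c d e f g h : Fin 3,
    (antB (mk8 a b c d e f g h) && injB (mk8 a b c d e f g h)) = false := by decide

def c4 : Fin 8 → Fin 4 := mk8 0 0 0 1 0 2 3 1

lemma c4_rainbow : IsRainbowVertexColoring (cycleGraph 8) c4 := by
  have RBdec : ∀ u v : Fin 8, u ≠ v →
      ((((cwS u ((v-u).val)).tail.dropLast).map c4).Nodup ∨
       (((cwS v ((u-v).val)).dropLast.tail).map c4).Nodup) := by decide
  have hnodup : ∀ (w d : Fin 8), (cwS w d.val).Nodup := by decide
  intro u v huv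
  have hd : u + (((v-u).val : ℕ) : Fin 8) = v := by
    rw [Fin.cast_val_eq_self]; exact add_sub_cancel u v
  have hd' : v + (((u-v).val : ℕ) : Fin 8) = u := by
    rw [Fin.cast_val_eq_self]; exact add_sub_cancel v u
  rcases RBdec u v huv with hcase | hcase
  · refine ⟨(walkTo u ((v-u).val)).copy rfl hd, ?_, ?_⟩
    · rw [Walk.isPath_def, Walk.support_copy, support_walkTo]
      exact hnodup u (v-u)
    · simp only [internalVertices, Walk.support_copy, support_walkTo]
      exact hcase
  · refine ⟨((walkTo v ((u-v).val)).copy rfl hd').reverse, ?_, ?_⟩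
    · apply Walk.IsPath.reverse
      rw [Walk.isPath_def, Walk.support_copy, support_walkTo]
      exact hnodup v (u-v)
    · simp only [internalVertices, Walk.support_reverse, Walk.support_copy, support_walkTo]
      rw [List.tail_reverse, dropLast_reverse', List.map_reverse,
        List.nodup_reverse]
      exact hcase

lemma c4_locating : IsLocatingRainbowColoring (cycleGraph 8) c4 := by
  refine ⟨c4_rainbow, ?_⟩
  have hdec : ∀ a b : Fin 8, codeN c4 a 0 = codeN c4 b 0 → codeN c4 a 1 = codeN c4 b 1 →
      codeN c4 a 2 = codeN c4 b 2 → codeN c4 a 3 = codeN c4 b 3 → a = b := by decide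
  intro a b hab
  have hi : ∀ i : Fin 4, codeN c4 a i = codeN c4 b i := fun i => by
    rw [← rainbowCode_eq, ← rainbowCode_eq]; exact congrFun hab i
  exact hdec a b (hi 0) (hi 1) (hi 2) (hi 3)

end AuxLR

open LocatingRainbow SimpleGraph in
/-- The cycle graph `C_8` satisfies `rvcl(C_8) = 4`. -/
theorem rvcl_cycleGraph_eight : rvcl (cycleGraph 8) = 4 := by
  have h4 : 4 ∈ {k : ℕ | ∃ c : Fin 8 → Fin k, IsLocatingRainbowColoring (cycleGraph 8) c} :=
    ⟨c4, c4_locating⟩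
  have hlow : ∀ m ∈ {k : ℕ | ∃ c : Fin 8 → Fin k, IsLocatingRainbowColoring (cycleGraph 8) c},
      4 ≤ m := by
    rintro m ⟨c, hrb, hinj⟩
    by_contra hlt
    push_neg at hlt
    have h3 : 3 ≤ m := k_ge_3 c hrb
    have hm : m = 3 := by omega
    subst hm
    have htri : triP c := fun u => ant_prop c hrb (by norm_num) u
    have hant : antB c = true := decide_eq_true htri
    have hinjB : injB c = true := by
      apply decide_eq_true
      refine List.Nodup.map ?_ (List.nodup_finRange 8)
      intro a b hab
      apply hinj
      funext i
      rw [rainbowCode_eq, rainbowCode_eq]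
      have h0 : LRaux.codeN c a 0 = LRaux.codeN c b 0 := congrArg Prod.fst hab
      have h1 : LRaux.codeN c a 1 = LRaux.codeN c b 1 := congrArg (Prod.fst ∘ Prod.snd) hab
      have h2 : LRaux.codeN c a 2 = LRaux.codeN c b 2 := congrArg (Prod.snd ∘ Prod.snd) hab
      fin_cases i
      · exact h0
      · exact h1
      · exact h2
    have hbd := bigDecide (c 0) (c 1) (c 2) (c 3) (c 4) (c 5) (c 6) (c 7)
    rw [mk8_eta] at hbd
    rw [hant, hinjB] at hbd
    simp at hbd
  unfold rvcl
  exact le_antisymm (Nat.sInf_le h4) (hlow _ (Nat.sInf_mem ⟨4, h4⟩))
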